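/- There exist δ0 > 0 and n0 ∈ ℕ such that the following holds for all 0 < δ ≤ δ0 and n ≥ n0. Assume the Setup and the triangle-set definitions, and assume |D̄| ≤ 8δn. Then |ℬ1| + |ℬ[D]| ≤ 11√δ·n·|D̄| + n − 1. -/

import Mathlib

open SimpleGraph

/-- The number of triangles (copies of `K₃`) in a graph `G`, i.e. `N(K₃, G)`. -/
noncomputable def triangleCount {V : Type*} (G : SimpleGraph V) : ℕ :=
  Set.ncard {s : Finset V | G.IsNClique 3 s}

/-- `G` contains a subgraph isomorphic to `H`. -/
def Contains {W V : Type*} (H : SimpleGraph W) (G : SimpleGraph V) : Prop :=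
  ∃ f : H →g G, Function.Injective f

/-- `G` is `H`-free: it contains no subgraph isomorphic to `H`. -/
def Free {W V : Type*} (H : SimpleGraph W) (G : SimpleGraph V) : Prop :=
  ¬ Contains H G

/-- The expansion `F^△` of a graph `F`: each edge `uv` of `F` is replaced by a triangle
`u v w_{uv}` where the new vertices `w_{uv}` are pairwise distinct and outside `V(F)`. -/
def expansion {V : Type*} (F : SimpleGraph V) : SimpleGraph (V ⊕ F.edgeSet) :=
  SimpleGraph.fromRel (fun a b =>
    (∃ u v, a = Sum.inl u ∧ b = Sum.inl v ∧ F.Adj u v) ∨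
    (∃ u, ∃ e : F.edgeSet, a = Sum.inl u ∧ b = Sum.inr e ∧ u ∈ (e : Sym2 V)))

/-- `C₄^△`, the expansion of the 4-edge cycle: a graph on 8 vertices. -/
def C4expansion : SimpleGraph ((Fin 4) ⊕ (SimpleGraph.cycleGraph 4).edgeSet) :=
  expansion (SimpleGraph.cycleGraph 4)

/-- The generalized Turán number `ex(n, K₃, H)`: the maximum number of triangles in an
`H`-free graph on `n` vertices. -/
noncomputable def exTriangles (n : ℕ) {W : Type*} (H : SimpleGraph W) : ℕ :=
  sSup {k | ∃ G : SimpleGraph (Fin n), _root_.Free H G ∧ triangleCount G = k}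

/-- `T(n)`: the complete bipartite graph on `Fin n` with parts
`X = {v : v < ⌊n/2⌋}` (of size `⌊n/2⌋`) and `Y = {v : v ≥ ⌊n/2⌋}` (of size `⌈n/2⌉`). -/
def Tgraph (n : ℕ) : SimpleGraph (Fin n) :=
  SimpleGraph.fromRel (fun u v => u.val < n / 2 ∧ n / 2 ≤ v.val)

/-- `T⁺(n)`: the graph `T(n)` with one extra edge (between vertices `0` and `1`) added
inside the part `X`. -/
def TgraphPlus (n : ℕ) : SimpleGraph (Fin n) :=
  SimpleGraph.fromRel (fun u v =>
    (u.val < n / 2 ∧ n / 2 ≤ v.val) ∨ (u.val = 0 ∧ v.val = 1))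

/-- `T⁼(n)`: the graph obtained from `T(n)` by adding the edge `e₁ = {0,1}` inside `X`,
adding the edge `e₂ = {⌊n/2⌋, ⌊n/2⌋+1}` inside `Y`, and deleting the perfect matching
`{0,⌊n/2⌋}, {1,⌊n/2⌋+1}` between the endpoints of `e₁` and of `e₂`. -/
def TgraphEq (n : ℕ) : SimpleGraph (Fin n) :=
  SimpleGraph.fromRel (fun u v =>
    (u.val < n / 2 ∧ n / 2 ≤ v.val ∧
      ¬(u.val = 0 ∧ v.val = n / 2) ∧ ¬(u.val = 1 ∧ v.val = n / 2 + 1))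
    ∨ (u.val = 0 ∧ v.val = 1) ∨ (u.val = n / 2 ∧ v.val = n / 2 + 1))

/-- The join `K₁ ⋈ H` of a single new vertex with the graph `H`. -/
def joinK1 {V : Type*} (H : SimpleGraph V) : SimpleGraph (Option V) :=
  SimpleGraph.fromRel (fun u v =>
    u = none ∨ ∃ a b, u = some a ∧ v = some b ∧ H.Adj a b)

/-- `S(n) = K₁ ⋈ T(n-1)`. -/
def Sgraph (n : ℕ) : SimpleGraph (Option (Fin (n - 1))) := joinK1 (Tgraph (n - 1))

/-- `S⁺(n) = K₁ ⋈ T⁺(n-1)`. -/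
def SgraphPlus (n : ℕ) : SimpleGraph (Option (Fin (n - 1))) := joinK1 (TgraphPlus (n - 1))

/-- `S⁼(n) = K₁ ⋈ T⁼(n-1)`. -/
def SgraphEq (n : ℕ) : SimpleGraph (Option (Fin (n - 1))) := joinK1 (TgraphEq (n - 1))

/-- `d_G(uv)`: the number of triangles of `G` containing the edge `uv`, i.e. the number of
common neighbors of `u` and `v`. -/
noncomputable def edgeTriangleDeg {V : Type*} (G : SimpleGraph V) (u v : V) : ℕ :=
  {w : V | G.Adj u w ∧ G.Adj v w}.ncard

/-- `e_G(A, B)`: the number of edges of `G` with one endpoint in `A` and the other in `B`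
(for disjoint `A`, `B`). -/
noncomputable def crossEdges {V : Type*} (G : SimpleGraph V) (A B : Set V) : ℕ :=
  {p : V × V | p.1 ∈ A ∧ p.2 ∈ B ∧ G.Adj p.1 p.2}.ncard

lemma cycle4_edges : ∀ s ∈ (SimpleGraph.cycleGraph 4).edgeSet,
    s = s(0,1) ∨ s = s(1,2) ∨ s = s(2,3) ∨ s = s(3,(0:Fin 4)) := by decide

lemma noC4exp {n : ℕ} {G : SimpleGraph (Fin n)} (hF : _root_.Free C4expansion G)
    (c0 c1 c2 c3 b0 b1 b2 b3 : Fin n)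
    (hnd : ([c0, c1, c2, c3, b0, b1, b2, b3] : List (Fin n)).Nodup)
    (h01 : G.Adj c0 c1) (h12 : G.Adj c1 c2) (h23 : G.Adj c2 c3) (h30 : G.Adj c3 c0)
    (hb0 : G.Adj b0 c0 ∧ G.Adj b0 c1) (hb1 : G.Adj b1 c1 ∧ G.Adj b1 c2)
    (hb2 : G.Adj b2 c2 ∧ G.Adj b2 c3) (hb3 : G.Adj b3 c3 ∧ G.Adj b3 c0) : False := by
  simp only [List.nodup_cons, List.mem_cons, List.mem_singleton, List.not_mem_nil,
    or_false, not_or, List.nodup_nil, and_true] at hnd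
  obtain ⟨⟨hc01, hc02, hc03, hcb00, hcb01, hcb02, hcb03⟩,
    ⟨hc12, hc13, hcb10, hcb11, hcb12, hcb13⟩,
    ⟨hc23, hcb20, hcb21, hcb22, hcb23⟩,
    ⟨hcb30, hcb31, hcb32, hcb33⟩,
    ⟨hb01, hb02, hb03⟩, ⟨hb12, hb13⟩, hb23, _⟩ := hnd
  let cv : Fin 4 → Fin n := ![c0, c1, c2, c3]
  let k : Sym2 (Fin 4) → Fin n := fun s =>
    if s = s(0,1) then b0 else if s = s(1,2) then b1
    else if s = s(2,3) then b2 else if s = s(3,(0:Fin 4)) then b3 else c0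
  have hk0 : k s(0,1) = b0 := by show (if _ then _ else _) = _; rw [if_pos rfl]
  have hk1 : k s(1,2) = b1 := by
    show (if _ then _ else _) = _; rw [if_neg (by decide), if_pos rfl]
  have hk2 : k s(2,3) = b2 := by
    show (if _ then _ else _) = _
    rw [if_neg (by decide), if_neg (by decide), if_pos rfl]
  have hk3 : k s(3,(0:Fin 4)) = b3 := by
    show (if _ then _ else _) = _
    rw [if_neg (by decide), if_neg (by decide), if_neg (by decide), if_pos rfl]
  -- every value of k on an edge is one of the b's, with matching edge
  have hkt : ∀ e : (SimpleGraph.cycleGraph 4).edgeSet,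
      (e.val = s(0,1) ∧ k e.val = b0) ∨ (e.val = s(1,2) ∧ k e.val = b1) ∨
      (e.val = s(2,3) ∧ k e.val = b2) ∨ (e.val = s(3,(0:Fin 4)) ∧ k e.val = b3) := by
    intro e
    rcases cycle4_edges e.val e.2 with h | h | h | h
    · exact Or.inl ⟨h, by rw [h, hk0]⟩
    · exact Or.inr (Or.inl ⟨h, by rw [h, hk1]⟩)
    · exact Or.inr (Or.inr (Or.inl ⟨h, by rw [h, hk2]⟩))
    · exact Or.inr (Or.inr (Or.inr ⟨h, by rw [h, hk3]⟩))
  have hcvb : ∀ i : Fin 4, ∀ e : (SimpleGraph.cycleGraph 4).edgeSet,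
      cv i ≠ k e.val := by
    intro i e
    rcases hkt e with ⟨_, h⟩ | ⟨_, h⟩ | ⟨_, h⟩ | ⟨_, h⟩ <;> rw [h] <;>
      fin_cases i <;> assumption
  apply hF
  refine ⟨⟨Sum.elim cv (fun e => k e.val), ?_⟩, ?_⟩
  · intro u v huv
    simp only [C4expansion, expansion, SimpleGraph.fromRel_adj] at huv
    obtain ⟨hne, h | h⟩ := huv
    all_goals {
      rcases h with ⟨i, j, rfl, rfl, hadj⟩ | ⟨i, e, rfl, rfl, hmem⟩
      · simp only [Sum.elim_inl]
        fin_cases i <;> fin_cases j <;>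
          first
            | exact absurd hadj (by decide)
            | exact h01 | exact h01.symm | exact h12 | exact h12.symm
            | exact h23 | exact h23.symm | exact h30 | exact h30.symm
      · simp only [Sum.elim_inl, Sum.elim_inr]
        rcases hkt e with ⟨he, h⟩ | ⟨he, h⟩ | ⟨he, h⟩ | ⟨he, h⟩ <;> rw [h] <;>
          rw [he] at hmem <;> rw [Sym2.mem_iff] at hmem <;>
            rcases hmem with rfl | rfl <;>
              first
                | exact hb0.1.symm | exact hb0.2.symm
                | exact hb1.1.symm | exact hb1.2.symm
                | exact hb2.1.symm | exact hb2.2.symm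
                | exact hb3.1.symm | exact hb3.2.symm
                | exact hb0.1 | exact hb0.2
                | exact hb1.1 | exact hb1.2
                | exact hb2.1 | exact hb2.2
                | exact hb3.1 | exact hb3.2
    }
  · intro u v huv
    match u, v with
    | Sum.inl i, Sum.inl j =>
      have huv' : cv i = cv j := huv
      congr 1
      fin_cases i <;> fin_cases j <;>
        first
          | rfl
          | exact absurd huv' (by assumption)
          | exact absurd huv'.symm (by assumption)
    | Sum.inl i, Sum.inr e =>
      exact absurd huv (hcvb i e)
    | Sum.inr e, Sum.inl i =>
      exact absurd (Eq.symm huv) (hcvb i e)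
    | Sum.inr e, Sum.inr e' =>
      have huv' : k e.val = k e'.val := huv
      congr 1
      apply Subtype.ext
      rcases hkt e with ⟨he, h⟩ | ⟨he, h⟩ | ⟨he, h⟩ | ⟨he, h⟩ <;>
        rcases hkt e' with ⟨he', h'⟩ | ⟨he', h'⟩ | ⟨he', h'⟩ | ⟨he', h'⟩ <;>
          rw [h, h'] at huv' <;>
            first
              | exact absurd huv' (by assumption)
              | exact absurd huv'.symm (by assumption)
              | (rw [he, he'])

lemma pick_avoid {α : Type*} (S : Set α) (hS : 8 ≤ S.ncard) (F : Finset α)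
    (hF : F.card ≤ 7) : ∃ p ∈ S, p ∉ F := by
  classical
  have h1 : (S ∩ ↑F).ncard ≤ F.card := by
    rw [← Set.ncard_coe_finset F]
    exact Set.ncard_le_ncard Set.inter_subset_right (F : Set α).toFinite
  have h2 := Set.ncard_inter_add_ncard_diff_eq_ncard S (↑F : Set α)
    (Set.finite_of_ncard_ne_zero (by omega))
  have h3 : 1 ≤ (S \ ↑F).ncard := by omega
  obtain ⟨p, hp⟩ := Set.nonempty_of_ncard_ne_zero (by omega : (S \ (↑F : Set α)).ncard ≠ 0)
  exact ⟨p, hp.1, by simpa using hp.2⟩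

/-- The key "star" lemma: in a `C4expansion`-free graph, given a 4-cycle `x a z b`
where `a` and `b` both have ≥ n/200 common neighbours with `x`, there are no
distinct apexes `p` (for edge `az`) and `q` (for edge `zb`) outside the cycle. -/
lemma starLemma {n : ℕ} {G : SimpleGraph (Fin n)} (hF : _root_.Free C4expansion G)
    (hn : 1600 ≤ n) (x a z b p q : Fin n)
    (hxz : x ≠ z) (hab : a ≠ b)
    (hxa : G.Adj x a) (haz : G.Adj a z) (hzb : G.Adj z b) (hbx : G.Adj b x)
    (hca : (n : ℝ) / 200 ≤ ({w | G.Adj a w ∧ G.Adj x w}.ncard : ℝ))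
    (hcb : (n : ℝ) / 200 ≤ ({w | G.Adj b w ∧ G.Adj x w}.ncard : ℝ))
    (hpa : G.Adj a p) (hpz : G.Adj z p) (hqz : G.Adj z q) (hqb : G.Adj b q)
    (hpq : p ≠ q) (hpx : p ≠ x) (hpb : p ≠ b) (hqx : q ≠ x) (hqa : q ≠ a) : False := by
  classical
  have h8 : (8 : ℝ) ≤ ((n : ℝ) / 200) := by
    have : (1600 : ℝ) ≤ (n : ℝ) := by exact_mod_cast hn
    linarith
  have hca8 : 8 ≤ {w | G.Adj a w ∧ G.Adj x w}.ncard := by exact_mod_cast le_trans h8 hca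
  have hcb8 : 8 ≤ {w | G.Adj b w ∧ G.Adj x w}.ncard := by exact_mod_cast le_trans h8 hcb
  have h6 : ({x, a, z, b, p, q} : Finset (Fin n)).card ≤ 6 := by
    refine le_trans (Finset.card_insert_le _ _) (Nat.add_le_add_right ?_ 1)
    refine le_trans (Finset.card_insert_le _ _) (Nat.add_le_add_right ?_ 1)
    refine le_trans (Finset.card_insert_le _ _) (Nat.add_le_add_right ?_ 1)
    refine le_trans (Finset.card_insert_le _ _) (Nat.add_le_add_right ?_ 1)
    refine le_trans (Finset.card_insert_le _ _) (Nat.add_le_add_right ?_ 1)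
    exact le_of_eq (Finset.card_singleton q)
  obtain ⟨a0, ha0S, ha0F⟩ := pick_avoid _ hca8 ({x, a, z, b, p, q} : Finset (Fin n))
    (le_trans h6 (by norm_num))
  have h7 : ({x, a, z, b, p, q, a0} : Finset (Fin n)).card ≤ 7 := by
    refine le_trans (Finset.card_insert_le _ _) (Nat.add_le_add_right ?_ 1)
    refine le_trans (Finset.card_insert_le _ _) (Nat.add_le_add_right ?_ 1)
    refine le_trans (Finset.card_insert_le _ _) (Nat.add_le_add_right ?_ 1)
    refine le_trans (Finset.card_insert_le _ _) (Nat.add_le_add_right ?_ 1)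
    refine le_trans (Finset.card_insert_le _ _) (Nat.add_le_add_right ?_ 1)
    refine le_trans (Finset.card_insert_le _ _) (Nat.add_le_add_right ?_ 1)
    exact le_of_eq (Finset.card_singleton a0)
  obtain ⟨a3, ha3S, ha3F⟩ := pick_avoid _ hcb8 ({x, a, z, b, p, q, a0} : Finset (Fin n)) h7
  simp only [Finset.mem_insert, Finset.mem_singleton, not_or] at ha0F ha3F
  obtain ⟨h0x, h0a, h0z, h0b, h0p, h0q⟩ := ha0F
  obtain ⟨h3x, h3a, h3z, h3b, h3p, h3q, h30⟩ := ha3F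
  obtain ⟨ha0a, ha0x⟩ := ha0S
  obtain ⟨ha3b, ha3x⟩ := ha3S
  refine noC4exp hF x a z b a0 p q a3 ?_ hxa haz hzb hbx
    ⟨ha0x.symm, ha0a.symm⟩ ⟨hpa.symm, hpz.symm⟩ ⟨hqz.symm, hqb.symm⟩
    ⟨ha3b.symm, ha3x.symm⟩
  simp only [List.nodup_cons, List.mem_cons, List.mem_singleton, List.not_mem_nil,
    or_false, not_or, List.nodup_nil, and_true]
  refine ⟨⟨hxa.ne, hxz, hbx.ne', fun h => h0x h.symm, fun h => hpx h.symm,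
      fun h => hqx h.symm, fun h => h3x h.symm⟩,
    ⟨haz.ne, hab, fun h => h0a h.symm, hpa.ne, fun h => hqa h.symm,
      fun h => h3a h.symm⟩,
    ⟨hzb.ne, fun h => h0z h.symm, hpz.ne, hqz.ne, fun h => h3z h.symm⟩,
    ⟨fun h => h0b h.symm, fun h => hpb h.symm, hqb.ne, fun h => h3b h.symm⟩,
    ⟨h0p, h0q, fun h => h30 h.symm⟩, ⟨hpq, fun h => h3p h.symm⟩, ⟨fun h => h3q h.symm, not_false⟩⟩

lemma two_int {α : Type*} [DecidableEq α] (C : Finset (Finset α))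
    (h3 : ∀ T ∈ C, T.card = 3)
    (h2 : ∀ T ∈ C, ∀ T' ∈ C, T ≠ T' → (T ∩ T').card = 2) :
    C.card ≤ (C.biUnion id).card := by
  classical
  by_cases hC : C.card ≤ 1
  · rcases C.eq_empty_or_nonempty with rfl | ⟨T0, hT0⟩
    · simp
    · have hsub : T0 ⊆ C.biUnion id := fun a ha => Finset.mem_biUnion.mpr ⟨T0, hT0, ha⟩
      have h30 := h3 T0 hT0
      have := Finset.card_le_card hsub
      omega
  · push_neg at hC
    obtain ⟨T1, hT1, T2, hT2, hT12⟩ := Finset.one_lt_card.mp hC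
    have hEcard : (T1 ∩ T2).card = 2 := h2 T1 hT1 T2 hT2 hT12
    have hET1 : T1 ∩ T2 ⊆ T1 := Finset.inter_subset_left
    have hsubbi : ∀ T ∈ C, T ⊆ C.biUnion id :=
      fun T hT a ha => Finset.mem_biUnion.mpr ⟨T, hT, ha⟩
    by_cases hall : ∀ T ∈ C, T1 ∩ T2 ⊆ T
    · -- star case: all triangles contain the common pair
      have hinj : Set.InjOn (fun T => T \ (T1 ∩ T2)) C := by
        intro T hT T' hT' h
        simp only at h
        rw [← Finset.union_sdiff_of_subset (hall T hT),
          ← Finset.union_sdiff_of_subset (hall T' hT'), h]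
      have hmaps : ∀ T ∈ C, (T \ (T1 ∩ T2)) ∈ (C.biUnion id).powersetCard 1 := by
        intro T hT
        rw [Finset.mem_powersetCard]
        exact ⟨le_trans Finset.sdiff_subset (hsubbi T hT),
          by rw [Finset.card_sdiff_of_subset (hall T hT), h3 T hT, hEcard]⟩
      have := Finset.card_le_card_of_injOn _ hmaps hinj
      rwa [Finset.card_powersetCard, Nat.choose_one_right] at this
    · push_neg at hall
      obtain ⟨T3, hT3, hET3⟩ := hall
      have hUcard : (T1 ∪ T2).card = 4 := by
        have := Finset.card_union_add_card_inter T1 T2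
        rw [h3 T1 hT1, h3 T2 hT2, hEcard] at this
        omega
      have hIE : ∀ T, ¬ T1 ∩ T2 ⊆ T → (T ∩ (T1 ∩ T2)).card ≤ 1 := by
        intro T hTE
        by_contra h
        push_neg at h
        have : T ∩ (T1 ∩ T2) = T1 ∩ T2 :=
          Finset.eq_of_subset_of_card_le Finset.inter_subset_right (by omega)
        exact hTE (by rw [← this]; exact Finset.inter_subset_left)
      have key : ∀ T ∈ C, ¬ T1 ∩ T2 ⊆ T → T ⊆ T1 ∪ T2 := by
        intro T hT hTE
        have hTne1 : T ≠ T1 := fun h => hTE (h ▸ hET1)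
        have hTne2 : T ≠ T2 := fun h => hTE (h ▸ Finset.inter_subset_right)
        have c1 : (T ∩ T1).card = 2 := h2 T hT T1 hT1 hTne1
        have c2 : (T ∩ T2).card = 2 := h2 T hT T2 hT2 hTne2
        have hcup : (T ∩ T1) ∪ (T ∩ T2) = T ∩ (T1 ∪ T2) :=
          (Finset.inter_union_distrib_left T T1 T2).symm
        have hcap : (T ∩ T1) ∩ (T ∩ T2) = T ∩ (T1 ∩ T2) := by
          ext a; simp only [Finset.mem_inter]; tauto
        have hcc := Finset.card_union_add_card_inter (T ∩ T1) (T ∩ T2)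
        rw [hcup, hcap, c1, c2] at hcc
        have h1 := hIE T hTE
        have hTU : T ∩ (T1 ∪ T2) = T := Finset.eq_of_subset_of_card_le
          Finset.inter_subset_left (by rw [h3 T hT]; omega)
        rw [← Finset.inter_eq_left]; exact hTU
      have hallU : ∀ T ∈ C, T ⊆ T1 ∪ T2 := by
        intro T hT
        by_cases hTE : T1 ∩ T2 ⊆ T
        · have hTT3 : T ≠ T3 := fun h => hET3 (h ▸ hTE)
          have c3 : (T ∩ T3).card = 2 := h2 T hT T3 hT3 hTT3
          have hsd : (T \ (T1 ∩ T2)).card = 1 := by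
            rw [Finset.card_sdiff_of_subset hTE, h3 T hT, hEcard]
          have hsplit : T ∩ T3 = ((T1 ∩ T2) ∩ T3) ∪ ((T \ (T1 ∩ T2)) ∩ T3) := by
            conv_lhs => rw [← Finset.union_sdiff_of_subset hTE]
            rw [Finset.union_inter_distrib_right]
          have hle : ((T1 ∩ T2) ∩ T3).card ≤ 1 := by
            have h1 := hIE T3 hET3
            have heq : (T1 ∩ T2) ∩ T3 = T3 ∩ (T1 ∩ T2) := Finset.inter_comm _ _
            rw [heq]; exact h1
          have hun := Finset.card_union_le ((T1 ∩ T2) ∩ T3) ((T \ (T1 ∩ T2)) ∩ T3)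
          rw [← hsplit, c3] at hun
          have hge : 1 ≤ ((T \ (T1 ∩ T2)) ∩ T3).card := by omega
          have hsub3 : T \ (T1 ∩ T2) ⊆ T3 := by
            have heq : (T \ (T1 ∩ T2)) ∩ T3 = T \ (T1 ∩ T2) :=
              Finset.eq_of_subset_of_card_le Finset.inter_subset_left (by omega)
            rw [← Finset.inter_eq_left]; exact heq
          intro a ha
          have hTsplit := Finset.union_sdiff_of_subset hTE
          rcases Finset.mem_union.mp
            (show a ∈ (T1 ∩ T2) ∪ (T \ (T1 ∩ T2)) by rw [hTsplit]; exact ha) with h | h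
          · exact Finset.mem_union_left _ (hET1 h)
          · exact (key T3 hT3 hET3) (hsub3 h)
        · exact key T hT hTE
      have hCsub : C ⊆ (T1 ∪ T2).powersetCard 3 := by
        intro T hT
        rw [Finset.mem_powersetCard]
        exact ⟨hallU T hT, h3 T hT⟩
      have h4 : C.card ≤ 4 := by
        have := Finset.card_le_card hCsub
        rwa [Finset.card_powersetCard, hUcard] at this
      have hbi : 4 ≤ (C.biUnion id).card := by
        have hsub : T1 ∪ T2 ⊆ C.biUnion id :=
          Finset.union_subset (hsubbi T1 hT1) (hsubbi T2 hT2)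
        have := Finset.card_le_card hsub
        omega
      omega

lemma family_bound {α : Type*} [DecidableEq α] (F : Finset (Finset α))
    (h3 : ∀ T ∈ F, T.card = 3)
    (hp : ∀ T ∈ F, ∀ T' ∈ F, T ≠ T' → (T ∩ T').card ≠ 1) :
    F.card ≤ (F.biUnion id).card := by
  classical
  induction F using Finset.strongInduction with
  | _ F ih =>
    rcases F.eq_empty_or_nonempty with rfl | ⟨T0, hT0⟩
    · simp
    · have hcard2 : ∀ T ∈ F, ∀ T' ∈ F, T ≠ T' → (T ∩ T').Nonempty → (T ∩ T').card = 2 := by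
        intro T hT T' hT' hne hnon
        have h1 := hp T hT T' hT' hne
        have hle : (T ∩ T').card ≤ 3 := by
          have := Finset.card_le_card (show T ∩ T' ⊆ T from Finset.inter_subset_left)
          rw [h3 T hT] at this; exact this
        have hpos : 1 ≤ (T ∩ T').card := Finset.card_pos.mpr hnon
        have hne3 : (T ∩ T').card ≠ 3 := by
          intro h
          have : T ∩ T' = T := Finset.eq_of_subset_of_card_le Finset.inter_subset_left
            (by rw [h3 T hT, h])
          have hsub : T ⊆ T' := by rw [← this]; exact Finset.inter_subset_right
          exact hne (Finset.eq_of_subset_of_card_le hsub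
            (by rw [h3 T hT, h3 T' hT']))
        omega
      set C := F.filter (fun T => (T ∩ T0).Nonempty) with hC
      have hT0C : T0 ∈ C := by
        rw [hC, Finset.mem_filter]
        refine ⟨hT0, ?_⟩
        rw [Finset.inter_self]
        exact Finset.card_pos.mp (by rw [h3 T0 hT0]; norm_num)
      have hCF : C ⊆ F := Finset.filter_subset _ _
      have h2C : ∀ T ∈ C, ∀ T' ∈ C, T ≠ T' → (T ∩ T').card = 2 := by
        intro T hTm T' hTm' hne
        obtain ⟨hTF, hTnon⟩ := Finset.mem_filter.mp hTm
        obtain ⟨hTF', hTnon'⟩ := Finset.mem_filter.mp hTm'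
        apply hcard2 T hTF T' hTF' hne
        by_cases hTT0 : T = T0
        · subst hTT0
          rw [Finset.inter_comm] at hTnon'
          exact hTnon'
        · by_cases hTT0' : T' = T0
          · subst hTT0'; exact hTnon
          · have c1 : (T ∩ T0).card = 2 := hcard2 T hTF T0 hT0 hTT0 hTnon
            have c2 : (T' ∩ T0).card = 2 := hcard2 T' hTF' T0 hT0 hTT0' hTnon'
            have hun : ((T ∩ T0) ∪ (T' ∩ T0)).card ≤ 3 := by
              have hs : (T ∩ T0) ∪ (T' ∩ T0) ⊆ T0 :=
                Finset.union_subset Finset.inter_subset_right Finset.inter_subset_right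
              have := Finset.card_le_card hs
              rw [h3 T0 hT0] at this; exact this
            have hcc := Finset.card_union_add_card_inter (T ∩ T0) (T' ∩ T0)
            rw [c1, c2] at hcc
            obtain ⟨w, hw⟩ := Finset.card_pos.mp
              (show 0 < ((T ∩ T0) ∩ (T' ∩ T0)).card by omega)
            simp only [Finset.mem_inter] at hw
            exact ⟨w, Finset.mem_inter.mpr ⟨hw.1.1, hw.2.1⟩⟩
      have hdisjTT : ∀ T ∈ F \ C, ∀ T' ∈ C, T ∩ T' = ∅ := by
        intro T hTm T' hTm'
        obtain ⟨hTF, hTnC⟩ := Finset.mem_sdiff.mp hTm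
        obtain ⟨hTF', hTnon'⟩ := Finset.mem_filter.mp hTm'
        have hT0empty : T ∩ T0 = ∅ := by
          by_contra h
          exact hTnC (Finset.mem_filter.mpr ⟨hTF, Finset.nonempty_iff_ne_empty.mpr h⟩)
        by_contra h
        have hnonTT : (T ∩ T').Nonempty := Finset.nonempty_iff_ne_empty.mpr h
        have hne : T ≠ T' := fun he => hTnC (he ▸ hTm')
        have c1 : (T ∩ T').card = 2 := hcard2 T hTF T' hTF' hne hnonTT
        by_cases hT'T0 : T' = T0
        · subst hT'T0
          exact absurd hT0empty (Finset.nonempty_iff_ne_empty.mp hnonTT)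
        · have c2 : (T' ∩ T0).card = 2 := hcard2 T' hTF' T0 hT0 hT'T0 hTnon'
          have hun : ((T ∩ T') ∪ (T' ∩ T0)).card ≤ 3 := by
            have hs : (T ∩ T') ∪ (T' ∩ T0) ⊆ T' := Finset.union_subset
              Finset.inter_subset_right Finset.inter_subset_left
            have := Finset.card_le_card hs
            rw [h3 T' hTF'] at this; exact this
          have hcc := Finset.card_union_add_card_inter (T ∩ T') (T' ∩ T0)
          rw [c1, c2] at hcc
          obtain ⟨w, hw⟩ := Finset.card_pos.mp (show 0 < ((T ∩ T') ∩ (T' ∩ T0)).card by omega)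
          simp only [Finset.mem_inter] at hw
          have : w ∈ T ∩ T0 := Finset.mem_inter.mpr ⟨hw.1.1, hw.2.2⟩
          rw [hT0empty] at this
          exact absurd this (Finset.notMem_empty w)
      have hRF : F \ C ⊂ F := by
        refine Finset.ssubset_iff_of_subset (Finset.sdiff_subset) |>.mpr ?_
        exact ⟨T0, hT0, fun h => (Finset.mem_sdiff.mp h).2 hT0C⟩
      have hRcard := ih (F \ C) hRF
        (fun T hT => h3 T (Finset.mem_sdiff.mp hT).1)
        (fun T hT T' hT' hne => hp T (Finset.mem_sdiff.mp hT).1 T' (Finset.mem_sdiff.mp hT').1 hne)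
      have hCcard := two_int C (fun T hT => h3 T (hCF hT)) h2C
      have hsplit : F.card = C.card + (F \ C).card := by
        rw [hC]
        rw [Finset.card_sdiff_of_subset (Finset.filter_subset _ _)]
        have := Finset.card_filter_le F (fun T => (T ∩ T0).Nonempty)
        omega
      have hbidisj : Disjoint (C.biUnion id) ((F \ C).biUnion id) := by
        rw [Finset.disjoint_left]
        intro a haC haR
        obtain ⟨T', hT', ha'⟩ := Finset.mem_biUnion.mp haC
        obtain ⟨T, hT, ha⟩ := Finset.mem_biUnion.mp haR
        have := hdisjTT T hT T' hT'
        have : a ∈ T ∩ T' := Finset.mem_inter.mpr ⟨ha, ha'⟩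
        rw [hdisjTT T hT T' hT'] at this
        exact absurd this (Finset.notMem_empty a)
      have hbiun : C.biUnion id ∪ (F \ C).biUnion id = F.biUnion id := by
        ext a
        simp only [Finset.mem_union, Finset.mem_biUnion, Finset.mem_sdiff, id]
        constructor
        · rintro (⟨T, hT, ha⟩ | ⟨T, hT, ha⟩)
          · exact ⟨T, hCF hT, ha⟩
          · exact ⟨T, hT.1, ha⟩
        · rintro ⟨T, hTF, ha⟩
          by_cases hTC : T ∈ C
          · exact Or.inl ⟨T, hTC, ha⟩
          · exact Or.inr ⟨T, ⟨hTF, hTC⟩, ha⟩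
      have := Finset.card_union_of_disjoint hbidisj
      rw [hbiun] at this
      omega

lemma ncard_setprod {α β : Type*} [Fintype α] [Fintype β] (A : Set α) (B : Set β) :
    {p : α × β | p.1 ∈ A ∧ p.2 ∈ B}.ncard = A.ncard * B.ncard := by
  classical
  have h : {p : α × β | p.1 ∈ A ∧ p.2 ∈ B} = A ×ˢ B := rfl
  rw [h, ← Nat.card_coe_set_eq, Nat.card_congr (Equiv.Set.prod A B), Nat.card_prod,
    Nat.card_coe_set_eq, Nat.card_coe_set_eq]

/-- counting pairs: adjacency or not -/
lemma cross_add_noncross {n : ℕ} (G : SimpleGraph (Fin n)) (A B : Set (Fin n)) :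
    crossEdges G A B + {p : Fin n × Fin n | p.1 ∈ A ∧ p.2 ∈ B ∧ ¬ G.Adj p.1 p.2}.ncard
      = A.ncard * B.ncard := by
  classical
  rw [← ncard_setprod A B, crossEdges, ← Set.ncard_union_eq ?_ (Set.toFinite _) (Set.toFinite _)]
  · congr 1
    ext p
    simp only [Set.mem_union, Set.mem_setOf_eq]
    tauto
  · rw [Set.disjoint_left]
    rintro p ⟨-, -, h⟩ ⟨-, -, h'⟩
    exact h' h

lemma noncross_swap {n : ℕ} (G : SimpleGraph (Fin n)) (A B : Set (Fin n)) :
    {p : Fin n × Fin n | p.1 ∈ A ∧ p.2 ∈ B ∧ ¬ G.Adj p.1 p.2}.ncard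
      = {p : Fin n × Fin n | p.1 ∈ B ∧ p.2 ∈ A ∧ ¬ G.Adj p.1 p.2}.ncard := by
  classical
  have h : {p : Fin n × Fin n | p.1 ∈ B ∧ p.2 ∈ A ∧ ¬ G.Adj p.1 p.2}
      = Prod.swap '' {p : Fin n × Fin n | p.1 ∈ A ∧ p.2 ∈ B ∧ ¬ G.Adj p.1 p.2} := by
    ext ⟨p1, p2⟩
    simp only [Set.mem_setOf_eq, Set.mem_image, Prod.exists, Prod.swap_prod_mk,
      Prod.mk.injEq]
    constructor
    · rintro ⟨h1, h2, h3⟩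
      exact ⟨p2, p1, ⟨h2, h1, fun h => h3 h.symm⟩, rfl, rfl⟩
    · rintro ⟨a, b, ⟨h1, h2, h3⟩, rfl, rfl⟩
      exact ⟨h2, h1, fun h => h3 h.symm⟩
  rw [h, Set.ncard_image_of_injective _ Prod.swap_injective]

/-- moving `v` across the cut: if the cut does not increase, then the
same-side degree of `v` is at most its cross degree. -/
lemma maxcut_swap {n : ℕ} (G : SimpleGraph (Fin n)) (A B : Set (Fin n)) (v : Fin n)
    (hvA : v ∈ A) (hvB : v ∉ B)
    (hle : crossEdges G (A \ {v}) (B ∪ {v}) ≤ crossEdges G A B) :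
    {a : Fin n | a ∈ A ∧ a ≠ v ∧ G.Adj a v}.ncard ≤ {b : Fin n | b ∈ B ∧ G.Adj v b}.ncard := by
  classical
  have h1 : {p : Fin n × Fin n | p.1 ∈ A \ {v} ∧ p.2 ∈ B ∪ {v} ∧ G.Adj p.1 p.2}
      = {p : Fin n × Fin n | p.1 ∈ A \ {v} ∧ p.2 ∈ B ∧ G.Adj p.1 p.2}
        ∪ ((fun a => (a, v)) '' {a : Fin n | a ∈ A ∧ a ≠ v ∧ G.Adj a v}) := by
    ext ⟨p1, p2⟩
    simp only [Set.mem_union, Set.mem_setOf_eq, Set.mem_image, Set.mem_diff,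
      Set.mem_singleton_iff, Prod.mk.injEq]
    constructor
    · rintro ⟨⟨h1, h2⟩, h3 | h3, h4⟩
      · exact Or.inl ⟨⟨h1, h2⟩, h3, h4⟩
      · exact Or.inr ⟨p1, ⟨h1, h2, h3 ▸ h4⟩, rfl, h3.symm⟩
    · rintro (⟨⟨h1, h2⟩, h3, h4⟩ | ⟨a, ⟨h1, h2, h3⟩, rfl, rfl⟩)
      · exact ⟨⟨h1, h2⟩, Or.inl h3, h4⟩
      · exact ⟨⟨h1, h2⟩, Or.inr rfl, h3⟩
  have h2 : {p : Fin n × Fin n | p.1 ∈ A ∧ p.2 ∈ B ∧ G.Adj p.1 p.2}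
      = {p : Fin n × Fin n | p.1 ∈ A \ {v} ∧ p.2 ∈ B ∧ G.Adj p.1 p.2}
        ∪ ((fun b => (v, b)) '' {b : Fin n | b ∈ B ∧ G.Adj v b}) := by
    ext ⟨p1, p2⟩
    simp only [Set.mem_union, Set.mem_setOf_eq, Set.mem_image, Set.mem_diff,
      Set.mem_singleton_iff, Prod.mk.injEq]
    constructor
    · rintro ⟨h1, h2, h3⟩
      by_cases hp : p1 = v
      · exact Or.inr ⟨p2, ⟨h2, hp ▸ h3⟩, hp.symm, rfl⟩
      · exact Or.inl ⟨⟨h1, hp⟩, h2, h3⟩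
    · rintro (⟨⟨h1, h2⟩, h3, h4⟩ | ⟨b, ⟨h1, h2⟩, rfl, rfl⟩)
      · exact ⟨h1, h3, h4⟩
      · exact ⟨hvA, h1, h2⟩
  have hd1 : Disjoint {p : Fin n × Fin n | p.1 ∈ A \ {v} ∧ p.2 ∈ B ∧ G.Adj p.1 p.2}
      ((fun a => (a, v)) '' {a : Fin n | a ∈ A ∧ a ≠ v ∧ G.Adj a v}) := by
    rw [Set.disjoint_left]
    rintro p ⟨-, hB, -⟩ ⟨a, -, rfl⟩
    exact hvB hB
  have hd2 : Disjoint {p : Fin n × Fin n | p.1 ∈ A \ {v} ∧ p.2 ∈ B ∧ G.Adj p.1 p.2}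
      ((fun b => (v, b)) '' {b : Fin n | b ∈ B ∧ G.Adj v b}) := by
    rw [Set.disjoint_left]
    rintro p ⟨⟨-, hne⟩, -, -⟩ ⟨b, -, rfl⟩
    exact hne rfl
  have e1 : crossEdges G (A \ {v}) (B ∪ {v})
      = {p : Fin n × Fin n | p.1 ∈ A \ {v} ∧ p.2 ∈ B ∧ G.Adj p.1 p.2}.ncard
        + {a : Fin n | a ∈ A ∧ a ≠ v ∧ G.Adj a v}.ncard := by
    rw [crossEdges, h1, Set.ncard_union_eq hd1 (Set.toFinite _) (Set.toFinite _),
      Set.ncard_image_of_injective _ (fun a b h => (Prod.mk.injEq _ _ _ _).mp h |>.1)]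
  have e2 : crossEdges G A B
      = {p : Fin n × Fin n | p.1 ∈ A \ {v} ∧ p.2 ∈ B ∧ G.Adj p.1 p.2}.ncard
        + {b : Fin n | b ∈ B ∧ G.Adj v b}.ncard := by
    rw [crossEdges, h2, Set.ncard_union_eq hd2 (Set.toFinite _) (Set.toFinite _),
      Set.ncard_image_of_injective _ (fun a b h => (Prod.mk.injEq _ _ _ _).mp h |>.2)]
  rw [e1, e2] at hle
  omega

lemma pick_avoid2 {α : Type*} (S : Set α) (hS : 3 ≤ S.ncard) (u q : α) :
    ∃ p ∈ S, p ≠ u ∧ p ≠ q := by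
  classical
  have h1 : (S ∩ ↑({u, q} : Finset α)).ncard ≤ ({u, q} : Finset α).card := by
    rw [← Set.ncard_coe_finset]
    exact Set.ncard_le_ncard Set.inter_subset_right (Set.toFinite _)
  have hc2 : ({u, q} : Finset α).card ≤ 2 := Finset.card_insert_le _ _ |>.trans (by simp)
  have h2 := Set.ncard_inter_add_ncard_diff_eq_ncard S (↑({u, q} : Finset α) : Set α)
    (Set.finite_of_ncard_ne_zero (by omega))
  obtain ⟨p, hp⟩ := Set.nonempty_of_ncard_ne_zero
    (by omega : (S \ (↑({u, q} : Finset α) : Set α)).ncard ≠ 0)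
  have := hp.2
  simp only [Finset.coe_insert, Finset.coe_singleton, Set.mem_insert_iff,
    Set.mem_singleton_iff, not_or] at this
  exact ⟨p, hp.1, this.1, this.2⟩

/-- Bound on the number of `G`-edges between `A` and `C`, both inside the
joint neighbourhood of `v` and consisting of high-codegree neighbours of `x`. -/
lemma eAC {n : ℕ} {G : SimpleGraph (Fin n)} (hF : _root_.Free C4expansion G) (hn : 1600 ≤ n)
    (x v : Fin n) (hvx : v ≠ x) (A C : Set (Fin n))
    (hAD : ∀ u, u ∈ A ∪ C → (G.Adj u x ∧
      (n : ℝ) / 200 ≤ ({w | G.Adj u w ∧ G.Adj x w}.ncard : ℝ)) ∧ G.Adj v u) :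
    ({p : Fin n × Fin n | p.1 ∈ A ∧ p.2 ∈ C ∧ G.Adj p.1 p.2}.ncard)
      ≤ 2 * (A.ncard + C.ncard) := by
  classical
  set W : Fin n → Set (Fin n) := fun u => {w | G.Adj v w ∧ G.Adj u w ∧ w ≠ x} with hW
  have hstar : ∀ u ∈ A ∪ C, ∀ u' ∈ A ∪ C, u ≠ u' →
      ∀ p ∈ W u, p ≠ u' → ∀ q ∈ W u', q ≠ u → p = q := by
    intro u hu u' hu' hne p hp hpu' q hq hqu
    by_contra hpq
    obtain ⟨hpv, hpu, hpx⟩ := hp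
    obtain ⟨hqv, hqu', hqx⟩ := hq
    exact starLemma hF hn x u v u' p q (fun h => hvx h.symm) hne
      ((hAD u hu).1.1.symm) ((hAD u hu).2.symm) ((hAD u' hu').2) ((hAD u' hu').1.1)
      (hAD u hu).1.2 (hAD u' hu').1.2
      hpu hpv hqv hqu' hpq hpx hpu' hqx hqu
  have hWmem : ∀ a ∈ A, ∀ c ∈ C, G.Adj a c → c ∈ W a := by
    intro a ha c hc hadj
    exact ⟨(hAD c (Or.inr hc)).2, hadj, (hAD c (Or.inr hc)).1.1.ne⟩
  by_cases hbig : ∃ u0 ∈ A ∪ C, 3 ≤ (W u0).ncard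
  · obtain ⟨u0, hu0, h3⟩ := hbig
    have hsmall : ∀ u ∈ A ∪ C, u ≠ u0 → W u ⊆ {u0} := by
      intro u hu hne q hq
      by_contra hqu0
      simp only [Set.mem_singleton_iff] at hqu0
      obtain ⟨p, hpW, hpu, hpq⟩ := pick_avoid2 (W u0) h3 u q
      have hqWu : q ∈ W u := hq
      have : p = q := hstar u0 hu0 u hu (fun h => hne h.symm) p hpW hpu q hqWu hqu0
      exact hpq this
    have hsub : {p : Fin n × Fin n | p.1 ∈ A ∧ p.2 ∈ C ∧ G.Adj p.1 p.2}
        ⊆ ((fun c => (u0, c)) '' C) ∪ ((fun a => (a, u0)) '' A) := by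
      rintro ⟨a, c⟩ ⟨ha, hc, hadj⟩
      by_cases hau0 : a = u0
      · exact Or.inl ⟨c, hc, by rw [hau0]⟩
      · have : c ∈ W a := hWmem a ha c hc hadj
        have hcu0 : c = u0 := hsmall a (Or.inl ha) hau0 this
        exact Or.inr ⟨a, ha, by rw [hcu0]⟩
    calc {p : Fin n × Fin n | p.1 ∈ A ∧ p.2 ∈ C ∧ G.Adj p.1 p.2}.ncard
        ≤ (((fun c => (u0, c)) '' C) ∪ ((fun a => (a, u0)) '' A)).ncard :=
          Set.ncard_le_ncard hsub (Set.toFinite _)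
      _ ≤ ((fun c => (u0, c)) '' C).ncard + ((fun a => (a, u0)) '' A).ncard :=
          Set.ncard_union_le _ _
      _ = C.ncard + A.ncard := by
          rw [Set.ncard_image_of_injective _ (fun a b h => ((Prod.mk.injEq _ _ _ _).mp h).2),
            Set.ncard_image_of_injective _ (fun a b h => ((Prod.mk.injEq _ _ _ _).mp h).1)]
      _ ≤ 2 * (A.ncard + C.ncard) := by omega
  · push_neg at hbig
    have hsub : {p : Fin n × Fin n | p.1 ∈ A ∧ p.2 ∈ C ∧ G.Adj p.1 p.2}
        ⊆ ↑((A.toFinite.toFinset).biUnion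
            (fun a => ({a} : Finset (Fin n)) ×ˢ ((W a).toFinite.toFinset))) := by
      rintro ⟨a, c⟩ ⟨ha, hc, hadj⟩
      simp only [Finset.coe_biUnion, Set.mem_iUnion, Finset.mem_coe, Finset.mem_product,
        Finset.mem_singleton, Set.Finite.mem_toFinset]
      exact ⟨a, by simpa [Set.Finite.mem_toFinset] using ha, rfl, hWmem a ha c hc hadj⟩
    calc {p : Fin n × Fin n | p.1 ∈ A ∧ p.2 ∈ C ∧ G.Adj p.1 p.2}.ncard
        ≤ ((A.toFinite.toFinset).biUnion
            (fun a => ({a} : Finset (Fin n)) ×ˢ ((W a).toFinite.toFinset))).card := by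
          rw [← Set.ncard_coe_finset]
          exact Set.ncard_le_ncard hsub (Set.toFinite _)
      _ ≤ ∑ a ∈ A.toFinite.toFinset,
            (({a} : Finset (Fin n)) ×ˢ ((W a).toFinite.toFinset)).card :=
          Finset.card_biUnion_le
      _ ≤ ∑ a ∈ A.toFinite.toFinset, 2 := by
          refine Finset.sum_le_sum ?_
          intro a ha
          rw [Finset.card_product, Finset.card_singleton, one_mul]
          have : (W a).ncard ≤ 2 :=
            Nat.lt_succ_iff.mp (hbig a (Or.inl (by simpa [Set.Finite.mem_toFinset] using ha)))
          rwa [Set.ncard_eq_toFinset_card _ (W a).toFinite] at this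
      _ = 2 * A.ncard := by
          rw [Finset.sum_const, smul_eq_mul, Set.ncard_eq_toFinset_card _ A.toFinite,
            mul_comm]
      _ ≤ 2 * (A.ncard + C.ncard) := by omega

set_option maxHeartbeats 1600000 in
lemma keyA {n : ℕ} {G : SimpleGraph (Fin n)} (hF : _root_.Free C4expansion G) (hn : 1600 ≤ n)
    (δ : ℝ) (hδl : 1 / (8 * (n : ℝ)) ≤ δ) (hδu : δ ≤ 1 / 10000) (hδ0 : 0 < δ)
    (x v : Fin n) (P Q : Set (Fin n)) (hvx : v ≠ x)
    (D Dbar : Set (Fin n))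
    (hDmem : ∀ a ∈ D, G.Adj a x ∧
      (n : ℝ) / 200 ≤ ({w | G.Adj a w ∧ G.Adj x w}.ncard : ℝ))
    (hswap : {a : Fin n | a ∈ P ∧ a ≠ v ∧ G.Adj a v}.ncard
        ≤ {b : Fin n | b ∈ Q ∧ G.Adj v b}.ncard)
    (hQD : ∀ b ∈ Q, b ∉ D → b ∈ Dbar)
    (hDbarcard : ((Dbar.ncard : ℝ)) ≤ 8 * δ * (n : ℝ))
    (hM : (({p : Fin n × Fin n | p.1 ∈ P ∧ p.2 ∈ Q ∧ ¬ G.Adj p.1 p.2}.ncard : ℝ))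
        ≤ 2 * δ * (n : ℝ) ^ 2) :
    (({a : Fin n | a ∈ D ∧ G.Adj v a ∧ a ∈ P}).ncard : ℝ) ≤ 11 * Real.sqrt δ * n := by
  classical
  by_contra hcon
  push_neg at hcon
  set A := {a : Fin n | a ∈ D ∧ G.Adj v a ∧ a ∈ P} with hA
  set C := {b : Fin n | b ∈ Q ∧ G.Adj v b ∧ b ∈ D} with hC
  -- |C| ≥ |A| - |Dbar|
  have h1 : A ⊆ {a : Fin n | a ∈ P ∧ a ≠ v ∧ G.Adj a v} := by
    rintro a ⟨haD, hav, haP⟩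
    exact ⟨haP, hav.ne', hav.symm⟩
  have h2 : {b : Fin n | b ∈ Q ∧ G.Adj v b} ⊆ C ∪ Dbar := by
    rintro b ⟨hbQ, hbv⟩
    by_cases hbD : b ∈ D
    · exact Or.inl ⟨hbQ, hbv, hbD⟩
    · exact Or.inr (hQD b hbQ hbD)
  have hAC : A.ncard ≤ C.ncard + Dbar.ncard := by
    calc A.ncard ≤ {a : Fin n | a ∈ P ∧ a ≠ v ∧ G.Adj a v}.ncard :=
          Set.ncard_le_ncard h1 (Set.toFinite _)
      _ ≤ {b : Fin n | b ∈ Q ∧ G.Adj v b}.ncard := hswap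
      _ ≤ (C ∪ Dbar).ncard := Set.ncard_le_ncard h2 (Set.toFinite _)
      _ ≤ C.ncard + Dbar.ncard := Set.ncard_union_le _ _
  -- edges bound
  have hedge : ({p : Fin n × Fin n | p.1 ∈ A ∧ p.2 ∈ C ∧ G.Adj p.1 p.2}.ncard)
      ≤ 2 * (A.ncard + C.ncard) := by
    refine eAC hF hn x v hvx A C ?_
    rintro u (⟨huD, huv, -⟩ | ⟨-, huv, huD⟩) <;> exact ⟨hDmem u huD, huv⟩
  have hprod := cross_add_noncross G A C
  have hNA : ({p : Fin n × Fin n | p.1 ∈ A ∧ p.2 ∈ C ∧ ¬ G.Adj p.1 p.2}.ncard : ℝ)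
      ≤ 2 * δ * (n : ℝ) ^ 2 := by
    refine le_trans ?_ hM
    have hsub : {p : Fin n × Fin n | p.1 ∈ A ∧ p.2 ∈ C ∧ ¬ G.Adj p.1 p.2}
        ⊆ {p : Fin n × Fin n | p.1 ∈ P ∧ p.2 ∈ Q ∧ ¬ G.Adj p.1 p.2} := by
      rintro ⟨p1, p2⟩ ⟨⟨-, -, hp1⟩, ⟨hp2, -, -⟩, hna⟩
      exact ⟨hp1, hp2, hna⟩
    exact_mod_cast Set.ncard_le_ncard hsub (Set.toFinite _)
  have hcardA : A.ncard ≤ n := by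
    have := Set.ncard_le_ncard (Set.subset_univ A) (Set.toFinite _)
    rwa [Set.ncard_univ, Nat.card_eq_fintype_card, Fintype.card_fin] at this
  have hcardC : C.ncard ≤ n := by
    have := Set.ncard_le_ncard (Set.subset_univ C) (Set.toFinite _)
    rwa [Set.ncard_univ, Nat.card_eq_fintype_card, Fintype.card_fin] at this
  -- real arithmetic
  have hKL8 : (A.ncard : ℝ) ≤ (C.ncard : ℝ) + (Dbar.ncard : ℝ) := by exact_mod_cast hAC
  have hsd : Real.sqrt δ * Real.sqrt δ = δ := Real.mul_self_sqrt hδ0.le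
  have hsd0 : 0 < Real.sqrt δ := Real.sqrt_pos.mpr hδ0
  have hsdu : Real.sqrt δ ≤ 1 / 100 := by
    rw [show (1 : ℝ) / 100 = Real.sqrt ((1 / 100) ^ 2) by
      rw [Real.sqrt_sq (by norm_num)]]
    exact Real.sqrt_le_sqrt (by nlinarith)
  have hn0 : (1600 : ℝ) ≤ (n : ℝ) := by exact_mod_cast hn
  have hLge : (A.ncard : ℝ) - 8 * δ * n ≤ (C.ncard : ℝ) := by linarith
  have hKge : 11 * Real.sqrt δ * n < (A.ncard : ℝ) := hcon
  have h8δ : 8 * δ * n ≤ Real.sqrt δ * n := by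
    have : 8 * δ = 8 * Real.sqrt δ * Real.sqrt δ := by rw [mul_assoc, hsd]
    rw [this]
    have : 8 * Real.sqrt δ ≤ 8 * (1 / 100) := by linarith
    nlinarith
  have hLge' : 10 * Real.sqrt δ * n ≤ (C.ncard : ℝ) := by linarith
  have hprodR : (A.ncard : ℝ) * (C.ncard : ℝ) ≤ 4 * n + 2 * δ * (n : ℝ) ^ 2 := by
    have he : ({p : Fin n × Fin n | p.1 ∈ A ∧ p.2 ∈ C ∧ G.Adj p.1 p.2}.ncard : ℝ)
        ≤ 2 * ((A.ncard : ℝ) + (C.ncard : ℝ)) := by exact_mod_cast hedge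
    unfold crossEdges at hprod
    have hp : ({p : Fin n × Fin n | p.1 ∈ A ∧ p.2 ∈ C ∧ G.Adj p.1 p.2}.ncard : ℝ)
        + ({p : Fin n × Fin n | p.1 ∈ A ∧ p.2 ∈ C ∧ ¬ G.Adj p.1 p.2}.ncard : ℝ)
        = (A.ncard : ℝ) * (C.ncard : ℝ) := by exact_mod_cast hprod
    have hKn : (A.ncard : ℝ) ≤ (n : ℝ) := by exact_mod_cast hcardA
    have hLn : (C.ncard : ℝ) ≤ (n : ℝ) := by exact_mod_cast hcardC
    nlinarith
  have hbig : 110 * δ * (n : ℝ) ^ 2 ≤ (A.ncard : ℝ) * (C.ncard : ℝ) := by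
    have h10 : (0 : ℝ) ≤ 10 * Real.sqrt δ * n := by positivity
    have h11 : (0 : ℝ) ≤ 11 * Real.sqrt δ * n := by positivity
    calc 110 * δ * (n : ℝ) ^ 2 = (11 * Real.sqrt δ * n) * (10 * Real.sqrt δ * n) := by
          ring_nf
          rw [Real.sq_sqrt hδ0.le]
          ring
      _ ≤ (A.ncard : ℝ) * (C.ncard : ℝ) := by
          apply mul_le_mul hKge.le hLge' h10 (le_trans h11 hKge.le)
  -- contradiction : 108 δ n² ≤ 4n but δ ≥ 1/(8n)
  have : 108 * δ * (n : ℝ) ^ 2 ≤ 4 * n := by linarith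
  have hδn : 1 / (8 * (n : ℝ)) * (n : ℝ) ^ 2 ≤ δ * (n : ℝ) ^ 2 := by
    apply mul_le_mul_of_nonneg_right hδl (by positivity)
  have hval : 1 / (8 * (n : ℝ)) * (n : ℝ) ^ 2 = n / 8 := by
    field_simp
  nlinarith

-- Triangles avoiding `x` with at least two vertices of high codegree with `x`
-- number at most `n - 1`.
open scoped Classical in
lemma Tprime_card {n : ℕ} {G : SimpleGraph (Fin n)} (hF : _root_.Free C4expansion G)
    (hn : 1600 ≤ n) (x : Fin n) (D : Set (Fin n))
    (hDmem : ∀ a ∈ D, G.Adj a x ∧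
      (n : ℝ) / 200 ≤ ({w | G.Adj a w ∧ G.Adj x w}.ncard : ℝ)) :
    (Finset.univ.filter (fun s : Finset (Fin n) =>
        G.IsNClique 3 s ∧ x ∉ s ∧ 2 ≤ (s.filter (· ∈ D)).card)).card ≤ n - 1 := by
  classical
  set F := Finset.univ.filter (fun s : Finset (Fin n) =>
    G.IsNClique 3 s ∧ x ∉ s ∧ 2 ≤ (s.filter (· ∈ D)).card) with hFdef
  have hmem : ∀ T ∈ F, G.IsNClique 3 T ∧ x ∉ T ∧ 2 ≤ (T.filter (· ∈ D)).card := by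
    intro T hT
    exact (Finset.mem_filter.mp hT).2
  have h3 : ∀ T ∈ F, T.card = 3 := fun T hT => (hmem T hT).1.2
  have hpair : ∀ T ∈ F, ∀ T' ∈ F, T ≠ T' → (T ∩ T').card ≠ 1 := by
    intro T hT T' hT' hne h1
    obtain ⟨hTcl, hxT, hTD⟩ := hmem T hT
    obtain ⟨hTcl', hxT', hTD'⟩ := hmem T' hT'
    obtain ⟨u, hu⟩ := Finset.card_eq_one.mp h1
    have huT : u ∈ T := Finset.mem_inter.mp (hu ▸ Finset.mem_singleton_self u) |>.1
    have huT' : u ∈ T' := Finset.mem_inter.mp (hu ▸ Finset.mem_singleton_self u) |>.2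
    have hinter : ∀ w : Fin n, w ∈ T → w ∈ T' → w = u := by
      intro w hw hw'
      have : w ∈ T ∩ T' := Finset.mem_inter.mpr ⟨hw, hw'⟩
      rw [hu] at this
      exact Finset.mem_singleton.mp this
    -- a D-vertex of T other than u
    have ha' : 1 ≤ ((T.filter (· ∈ D)).erase u).card := by
      have h2 := Finset.pred_card_le_card_erase (a := u) (s := T.filter (· ∈ D))
      omega
    obtain ⟨a, haer⟩ := Finset.card_pos.mp ha'
    have hau : a ≠ u := Finset.ne_of_mem_erase haer
    have haTD := Finset.mem_of_mem_erase haer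
    have haT : a ∈ T := Finset.mem_of_mem_filter a haTD
    have haD : a ∈ D := (Finset.mem_filter.mp haTD).2
    have hb' : 1 ≤ ((T'.filter (· ∈ D)).erase u).card := by
      have h2 := Finset.pred_card_le_card_erase (a := u) (s := T'.filter (· ∈ D))
      omega
    obtain ⟨b, hber⟩ := Finset.card_pos.mp hb'
    have hbu : b ≠ u := Finset.ne_of_mem_erase hber
    have hbTD := Finset.mem_of_mem_erase hber
    have hbT : b ∈ T' := Finset.mem_of_mem_filter b hbTD
    have hbD : b ∈ D := (Finset.mem_filter.mp hbTD).2
    -- third vertices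
    have hpcard : 1 ≤ (T \ {u, a}).card := by
      have hsub : ({u, a} : Finset (Fin n)) ⊆ T := by
        intro w hw
        rcases Finset.mem_insert.mp hw with rfl | hw
        · exact huT
        · exact (Finset.mem_singleton.mp hw) ▸ haT
      have hc2 : ({u, a} : Finset (Fin n)).card = 2 := by
        rw [Finset.card_insert_of_notMem (by simp [Ne.symm hau]), Finset.card_singleton]
      have := Finset.card_sdiff_of_subset hsub
      rw [hc2, h3 T hT] at this
      omega
    obtain ⟨p, hpmem⟩ := Finset.card_pos.mp hpcard
    have hpT : p ∈ T := (Finset.mem_sdiff.mp hpmem).1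
    have hpua : p ≠ u ∧ p ≠ a := by
      have := (Finset.mem_sdiff.mp hpmem).2
      simp only [Finset.mem_insert, Finset.mem_singleton, not_or] at this
      exact this
    have hqcard : 1 ≤ (T' \ {u, b}).card := by
      have hsub : ({u, b} : Finset (Fin n)) ⊆ T' := by
        intro w hw
        rcases Finset.mem_insert.mp hw with rfl | hw
        · exact huT'
        · exact (Finset.mem_singleton.mp hw) ▸ hbT
      have hc2 : ({u, b} : Finset (Fin n)).card = 2 := by
        rw [Finset.card_insert_of_notMem (by simp [Ne.symm hbu]), Finset.card_singleton]
      have := Finset.card_sdiff_of_subset hsub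
      rw [hc2, h3 T' hT'] at this
      omega
    obtain ⟨q, hqmem⟩ := Finset.card_pos.mp hqcard
    have hqT : q ∈ T' := (Finset.mem_sdiff.mp hqmem).1
    have hqub : q ≠ u ∧ q ≠ b := by
      have := (Finset.mem_sdiff.mp hqmem).2
      simp only [Finset.mem_insert, Finset.mem_singleton, not_or] at this
      exact this
    -- distinctness across T and T'
    have hab : a ≠ b := by
      intro h
      exact hau (hinter a haT (h ▸ hbT))
    have hpq : p ≠ q := by
      intro h
      exact hpua.1 (hinter p hpT (h ▸ hqT))
    have hpb : p ≠ b := by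
      intro h
      exact hpua.1 (hinter p hpT (h ▸ hbT))
    have hqa : q ≠ a := fun h => hqub.1 (h.trans (hinter a haT (h ▸ hqT)))
    -- adjacency within the cliques
    have hadjT : ∀ y ∈ T, ∀ z ∈ T, y ≠ z → G.Adj y z := by
      intro y hy z hz hyz
      exact hTcl.1 (by exact_mod_cast hy) (by exact_mod_cast hz) hyz
    have hadjT' : ∀ y ∈ T', ∀ z ∈ T', y ≠ z → G.Adj y z := by
      intro y hy z hz hyz
      exact hTcl'.1 (by exact_mod_cast hy) (by exact_mod_cast hz) hyz
    have hxu : x ≠ u := fun h => hxT (h ▸ huT)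
    exact starLemma hF hn x a u b p q hxu hab
      ((hDmem a haD).1.symm) (hadjT a haT u huT hau) (hadjT' u huT' b hbT (Ne.symm hbu))
      ((hDmem b hbD).1) (hDmem a haD).2 (hDmem b hbD).2
      (hadjT a haT p hpT (Ne.symm (hpua.2))) (hadjT u huT p hpT (Ne.symm hpua.1))
      (hadjT' u huT' q hqT (Ne.symm hqub.1)) (hadjT' b hbT q hqT (Ne.symm hqub.2))
      hpq (fun h => hxT (h ▸ hpT)) hpb (fun h => hxT' (h ▸ hqT)) hqa
  have hbound := family_bound F h3 hpair
  have hbiun : F.biUnion id ⊆ Finset.univ.erase x := by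
    intro w hw
    obtain ⟨T, hT, hwT⟩ := Finset.mem_biUnion.mp hw
    refine Finset.mem_erase.mpr ⟨?_, Finset.mem_univ w⟩
    intro h
    exact (hmem T hT).2.1 (h ▸ hwT)
  have := Finset.card_le_card hbiun
  rw [Finset.card_erase_of_mem (Finset.mem_univ x), Finset.card_univ, Fintype.card_fin] at this
  omega

lemma cross_swap {n : ℕ} (G : SimpleGraph (Fin n)) (A B : Set (Fin n)) :
    crossEdges G A B = crossEdges G B A := by
  classical
  have h : {p : Fin n × Fin n | p.1 ∈ B ∧ p.2 ∈ A ∧ G.Adj p.1 p.2}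
      = Prod.swap '' {p : Fin n × Fin n | p.1 ∈ A ∧ p.2 ∈ B ∧ G.Adj p.1 p.2} := by
    ext ⟨p1, p2⟩
    simp only [Set.mem_setOf_eq, Set.mem_image, Prod.exists, Prod.swap_prod_mk,
      Prod.mk.injEq]
    constructor
    · rintro ⟨h1, h2, h3⟩
      exact ⟨p2, p1, ⟨h2, h1, h3.symm⟩, rfl, rfl⟩
    · rintro ⟨a, b, ⟨h1, h2, h3⟩, rfl, rfl⟩
      exact ⟨h2, h1, h3.symm⟩
  rw [crossEdges, crossEdges, h, Set.ncard_image_of_injective _ Prod.swap_injective]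

set_option maxHeartbeats 1600000 in
lemma AvBound {n : ℕ} {G : SimpleGraph (Fin n)} (hF : _root_.Free C4expansion G)
    (hn : 1600 ≤ n)
    (δ : ℝ) (hδl : 1 / (8 * (n : ℝ)) ≤ δ) (hδu : δ ≤ 1 / 10000) (hδ0 : 0 < δ)
    (x : Fin n) (V1 V2 : Set (Fin n)) (hdisj : Disjoint V1 V2)
    (hunion : V1 ∪ V2 = ({x}ᶜ : Set (Fin n)))
    (hmax : ∀ W1 W2 : Set (Fin n), Disjoint W1 W2 → W1 ∪ W2 = ({x}ᶜ : Set (Fin n)) →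
      crossEdges G W1 W2 ≤ crossEdges G V1 V2)
    (D Dbar : Set (Fin n))
    (hDmem : ∀ a ∈ D, G.Adj a x ∧
      (n : ℝ) / 200 ≤ ({w | G.Adj a w ∧ G.Adj x w}.ncard : ℝ))
    (hDbar : Dbar = ({x}ᶜ : Set (Fin n)) \ D)
    (hDbarcard : ((Dbar.ncard : ℝ)) ≤ 8 * δ * (n : ℝ))
    (hM12 : (({p : Fin n × Fin n | p.1 ∈ V1 ∧ p.2 ∈ V2 ∧ ¬ G.Adj p.1 p.2}.ncard : ℝ))
        ≤ 2 * δ * (n : ℝ) ^ 2)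
    (v : Fin n) (hv : v ∈ V1 ∪ V2) :
    (({a : Fin n | a ∈ D ∧ G.Adj v a ∧
        ((v ∈ V1 ∧ a ∈ V1) ∨ (v ∈ V2 ∧ a ∈ V2))}).ncard : ℝ)
      ≤ 11 * Real.sqrt δ * n := by
  classical
  have hvx : v ≠ x := by
    intro h
    have : v ∈ ({x}ᶜ : Set (Fin n)) := hunion ▸ hv
    exact this (h ▸ rfl)
  rcases hv with hv1 | hv2
  · have hvn2 : v ∉ V2 := Set.disjoint_left.mp hdisj hv1
    have hsetEq : {a : Fin n | a ∈ D ∧ G.Adj v a ∧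
        ((v ∈ V1 ∧ a ∈ V1) ∨ (v ∈ V2 ∧ a ∈ V2))}
        = {a : Fin n | a ∈ D ∧ G.Adj v a ∧ a ∈ V1} := by
      ext a
      simp only [Set.mem_setOf_eq]
      constructor
      · rintro ⟨h1, h2, ⟨-, h3⟩ | ⟨h3, -⟩⟩
        · exact ⟨h1, h2, h3⟩
        · exact absurd h3 hvn2
      · rintro ⟨h1, h2, h3⟩
        exact ⟨h1, h2, Or.inl ⟨hv1, h3⟩⟩
    rw [hsetEq]
    have hd' : Disjoint (V1 \ {v}) (V2 ∪ {v}) := by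
      rw [Set.disjoint_left]
      rintro a ⟨ha1, hav⟩ (ha2 | ha2)
      · exact Set.disjoint_left.mp hdisj ha1 ha2
      · exact hav ha2
    have hu' : (V1 \ {v}) ∪ (V2 ∪ {v}) = ({x}ᶜ : Set (Fin n)) := by
      rw [← hunion]
      ext a
      simp only [Set.mem_union, Set.mem_diff, Set.mem_singleton_iff]
      constructor
      · rintro ((⟨h1, -⟩) | (h2 | h3))
        · exact Or.inl h1
        · exact Or.inr h2
        · exact Or.inl (h3 ▸ hv1)
      · rintro (h1 | h2)
        · by_cases hav : a = v
          · exact Or.inr (Or.inr hav)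
          · exact Or.inl ⟨h1, hav⟩
        · exact Or.inr (Or.inl h2)
    have hswap := maxcut_swap G V1 V2 v hv1 hvn2 (hmax _ _ hd' hu')
    refine keyA hF hn δ hδl hδu hδ0 x v V1 V2 hvx D Dbar hDmem hswap ?_ hDbarcard hM12
    intro b hb hbD
    rw [hDbar]
    exact ⟨hunion ▸ Or.inr hb, hbD⟩
  · have hvn1 : v ∉ V1 := Set.disjoint_right.mp hdisj hv2
    have hsetEq : {a : Fin n | a ∈ D ∧ G.Adj v a ∧
        ((v ∈ V1 ∧ a ∈ V1) ∨ (v ∈ V2 ∧ a ∈ V2))}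
        = {a : Fin n | a ∈ D ∧ G.Adj v a ∧ a ∈ V2} := by
      ext a
      simp only [Set.mem_setOf_eq]
      constructor
      · rintro ⟨h1, h2, ⟨h3, -⟩ | ⟨-, h3⟩⟩
        · exact absurd h3 hvn1
        · exact ⟨h1, h2, h3⟩
      · rintro ⟨h1, h2, h3⟩
        exact ⟨h1, h2, Or.inr ⟨hv2, h3⟩⟩
    rw [hsetEq]
    have hd' : Disjoint (V2 \ {v}) (V1 ∪ {v}) := by
      rw [Set.disjoint_left]
      rintro a ⟨ha1, hav⟩ (ha2 | ha2)
      · exact Set.disjoint_right.mp hdisj ha1 ha2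
      · exact hav ha2
    have hu' : (V2 \ {v}) ∪ (V1 ∪ {v}) = ({x}ᶜ : Set (Fin n)) := by
      rw [← hunion]
      ext a
      simp only [Set.mem_union, Set.mem_diff, Set.mem_singleton_iff]
      constructor
      · rintro ((⟨h1, -⟩) | (h2 | h3))
        · exact Or.inr h1
        · exact Or.inl h2
        · exact Or.inr (h3 ▸ hv2)
      · rintro (h1 | h2)
        · exact Or.inr (Or.inl h1)
        · by_cases hav : a = v
          · exact Or.inr (Or.inr hav)
          · exact Or.inl ⟨h2, hav⟩
    have hle : crossEdges G (V2 \ {v}) (V1 ∪ {v}) ≤ crossEdges G V2 V1 := by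
      rw [← cross_swap G V1 V2]
      exact hmax _ _ hd' hu'
    have hswap := maxcut_swap G V2 V1 v hv2 hvn1 hle
    have hM21 : (({p : Fin n × Fin n | p.1 ∈ V2 ∧ p.2 ∈ V1 ∧ ¬ G.Adj p.1 p.2}.ncard : ℝ))
        ≤ 2 * δ * (n : ℝ) ^ 2 := by
      rw [← noncross_swap G V1 V2]
      exact hM12
    refine keyA hF hn δ hδl hδu hδ0 x v V2 V1 hvx D Dbar hDmem hswap ?_ hDbarcard hM21
    intro b hb hbD
    rw [hDbar]
    exact ⟨hunion ▸ Or.inl hb, hbD⟩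

set_option maxHeartbeats 3200000
/-- There exist `δ₀ > 0` and `n₀` such that for all `0 < δ ≤ δ₀` and `n ≥ n₀`,
under the Setup and the triangle-set definitions with `|D̄| ≤ 8δn`,
`|ℬ₁| + |ℬ[D]| ≤ 11√δ·n·|D̄| + n - 1`. -/
theorem stmt17 : ∃ δ0 : ℝ, 0 < δ0 ∧ ∃ n0 : ℕ,
    ∀ δ : ℝ, 0 < δ → δ ≤ δ0 → ∀ n : ℕ, n0 ≤ n →
    ∀ G : SimpleGraph (Fin n), _root_.Free C4expansion G →
    (∀ u v : Fin n, G.Adj u v → ∃ w : Fin n, G.Adj u w ∧ G.Adj v w) →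
    ∀ (x : Fin n) (V1 V2 : Set (Fin n)),
    Disjoint V1 V2 → V1 ∪ V2 = {x}ᶜ →
    (∀ W1 W2 : Set (Fin n), Disjoint W1 W2 → W1 ∪ W2 = {x}ᶜ →
      crossEdges G W1 W2 ≤ crossEdges G V1 V2) →
    ((n : ℝ) ^ 2 / 4 - 2 * δ * (n : ℝ) ^ 2 ≤ (crossEdges G V1 V2 : ℝ)) →
    ∀ D : Set (Fin n),
    D = {v : Fin n | v ≠ x ∧ G.Adj v x ∧
      (n : ℝ) / 200 ≤ (edgeTriangleDeg G v x : ℝ)} →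
    ∀ Dbar : Set (Fin n), Dbar = ({x}ᶜ : Set (Fin n)) \ D →
    ((Dbar.ncard : ℝ) ≤ 8 * δ * (n : ℝ)) →
    ∀ S : SimpleGraph (Fin n),
    S = SimpleGraph.fromRel (fun u v => u = x ∨ (u ∈ V1 ∧ v ∈ V2)) →
    ∀ calB1 : Set (Finset (Fin n)),
    calB1 = {s : Finset (Fin n) |
      (G.IsNClique 3 s ∧ ¬ S.IsNClique 3 s) ∧ ((s : Set (Fin n)) ∩ Dbar).ncard = 1} →
    ∀ calBD : Set (Finset (Fin n)),
    calBD = {s : Finset (Fin n) |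
      (G.IsNClique 3 s ∧ ¬ S.IsNClique 3 s) ∧ ((s : Set (Fin n)) ∩ Dbar).ncard = 0 ∧
        (s : Set (Fin n)) ⊆ D} →
    ((calB1.ncard : ℝ) + (calBD.ncard : ℝ)
        ≤ 11 * Real.sqrt δ * (n : ℝ) * (Dbar.ncard : ℝ) + (n : ℝ) - 1) := by
  classical
  refine ⟨1 / 10000, by norm_num, 1600, ?_⟩
  intro δ hδ0 hδu n hn G hF _hTri x V1 V2 hdisj hunion hmax hcross D hDdef Dbar hDbardef
    hDbarcard S hSdef calB1 hB1def calBD hBDdef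
  have hnR : (1600 : ℝ) ≤ (n : ℝ) := by exact_mod_cast hn
  have hn1 : 1 ≤ n := by omega
  have hDmem : ∀ a ∈ D, G.Adj a x ∧
      (n : ℝ) / 200 ≤ ({w | G.Adj a w ∧ G.Adj x w}.ncard : ℝ) := by
    intro a ha
    rw [hDdef] at ha
    exact ⟨ha.2.1, ha.2.2⟩
  have hxD : x ∉ D := by rw [hDdef]; exact fun h => h.1 rfl
  have hxDbar : x ∉ Dbar := by
    rw [hDbardef]
    rintro ⟨hx, -⟩
    exact hx rfl
  have hDfull : ∀ w : Fin n, w ≠ x → w ∉ Dbar → w ∈ D := by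
    intro w hwx hwD
    by_contra h
    exact hwD (hDbardef ▸ ⟨Set.mem_compl_singleton_iff.mpr hwx, h⟩)
  -- sizes of the parts
  have hcompl_card : ({x}ᶜ : Set (Fin n)).ncard = n - 1 := by
    rw [show ({x}ᶜ : Set (Fin n)) = Set.univ \ {x} by rw [Set.compl_eq_univ_diff],
      Set.ncard_diff (Set.subset_univ _), Set.ncard_singleton, Set.ncard_univ,
      Nat.card_eq_fintype_card, Fintype.card_fin]
  have hV12 : V1.ncard + V2.ncard = n - 1 := by
    rw [← Set.ncard_union_eq hdisj (Set.toFinite _) (Set.toFinite _), hunion, hcompl_card]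
  have hV12R : (V1.ncard : ℝ) + (V2.ncard : ℝ) = (n : ℝ) - 1 := by
    have : ((V1.ncard + V2.ncard : ℕ) : ℝ) = ((n - 1 : ℕ) : ℝ) := by exact_mod_cast hV12
    push_cast [Nat.cast_sub hn1] at this
    linarith
  have hprod := cross_add_noncross G V1 V2
  have hprodR : (crossEdges G V1 V2 : ℝ)
      + ({p : Fin n × Fin n | p.1 ∈ V1 ∧ p.2 ∈ V2 ∧ ¬ G.Adj p.1 p.2}.ncard : ℝ)
      = (V1.ncard : ℝ) * (V2.ncard : ℝ) := by exact_mod_cast hprod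
  have hABle : (V1.ncard : ℝ) * (V2.ncard : ℝ) ≤ ((n : ℝ) - 1) ^ 2 / 4 := by
    nlinarith [sq_nonneg ((V1.ncard : ℝ) - (V2.ncard : ℝ))]
  have hNA0 : (0 : ℝ) ≤ ({p : Fin n × Fin n | p.1 ∈ V1 ∧ p.2 ∈ V2 ∧ ¬ G.Adj p.1 p.2}.ncard : ℝ) :=
    Nat.cast_nonneg _
  have hδl : 1 / (8 * (n : ℝ)) ≤ δ := by
    have h2δ : (n : ℝ) / 4 ≤ 2 * δ * (n : ℝ) ^ 2 := by nlinarith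
    rw [div_le_iff₀ (by nlinarith : (0 : ℝ) < 8 * (n : ℝ))]
    nlinarith
  have hM12 : (({p : Fin n × Fin n | p.1 ∈ V1 ∧ p.2 ∈ V2 ∧ ¬ G.Adj p.1 p.2}.ncard : ℝ))
      ≤ 2 * δ * (n : ℝ) ^ 2 := by nlinarith
  -- the per-vertex bound
  have hAv : ∀ v ∈ Dbar, (({a : Fin n | a ∈ D ∧ G.Adj v a ∧
      ((v ∈ V1 ∧ a ∈ V1) ∨ (v ∈ V2 ∧ a ∈ V2))}).ncard : ℝ) ≤ 11 * Real.sqrt δ * n := by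
    intro v hv
    have hv' : v ∈ V1 ∪ V2 := by
      rw [hunion]
      exact (hDbardef ▸ hv).1
    exact AvBound hF hn δ hδl hδu hδ0 x V1 V2 hdisj hunion hmax D Dbar hDmem hDbardef
      hDbarcard hM12 v hv'
  -- Finset versions
  set B1f := calB1.toFinite.toFinset with hB1f
  set BDf := calBD.toFinite.toFinset with hBDf
  set B1x := B1f.filter (fun s => x ∈ s) with hB1x
  set B1nx := B1f.filter (fun s => x ∉ s) with hB1nx
  have hsplit : B1x.card + B1nx.card = B1f.card :=
    Finset.card_filter_add_card_filter_not (fun s => x ∈ s)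
  -- every triangle in calB1 or calBD is a G-triangle with card 3
  have hB1mem : ∀ s ∈ B1f, (G.IsNClique 3 s ∧ ¬ S.IsNClique 3 s)
      ∧ ((s : Set (Fin n)) ∩ Dbar).ncard = 1 := by
    intro s hs
    rw [hB1f, Set.Finite.mem_toFinset, hB1def] at hs
    exact hs
  have hBDmem : ∀ s ∈ BDf, (G.IsNClique 3 s ∧ ¬ S.IsNClique 3 s)
      ∧ ((s : Set (Fin n)) ∩ Dbar).ncard = 0 ∧ (s : Set (Fin n)) ⊆ D := by
    intro s hs
    rw [hBDf, Set.Finite.mem_toFinset, hBDdef] at hs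
    exact hs
  -- Part 1 : triangles not containing x
  set Tf := Finset.univ.filter (fun s : Finset (Fin n) =>
    G.IsNClique 3 s ∧ x ∉ s ∧ 2 ≤ (s.filter (· ∈ D)).card) with hTf
  have hsub1 : B1nx ⊆ Tf := by
    intro s hs
    obtain ⟨hsB, hxs⟩ := Finset.mem_filter.mp hs
    obtain ⟨⟨hscl, -⟩, hs1⟩ := hB1mem s hsB
    obtain ⟨v, hveq⟩ := Set.ncard_eq_one.mp hs1
    have hvmem : v ∈ (s : Set (Fin n)) ∩ Dbar := by rw [hveq]; rfl
    have hvs : v ∈ s := by exact_mod_cast hvmem.1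
    refine Finset.mem_filter.mpr ⟨Finset.mem_univ _, hscl, hxs, ?_⟩
    have herase : s.erase v ⊆ s.filter (· ∈ D) := by
      intro w hw
      obtain ⟨hwv, hws⟩ := Finset.mem_erase.mp hw
      refine Finset.mem_filter.mpr ⟨hws, ?_⟩
      refine hDfull w (fun h => hxs (h ▸ hws)) ?_
      intro hwD
      have : w ∈ (s : Set (Fin n)) ∩ Dbar := ⟨by exact_mod_cast hws, hwD⟩
      rw [hveq] at this
      exact hwv (by exact_mod_cast this)
    have := Finset.card_le_card herase
    rw [Finset.card_erase_of_mem hvs, hscl.2] at this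
    omega
  have hsub2 : BDf ⊆ Tf := by
    intro s hs
    obtain ⟨⟨hscl, -⟩, -, hsD⟩ := hBDmem s hs
    refine Finset.mem_filter.mpr ⟨Finset.mem_univ _, hscl, ?_, ?_⟩
    · intro hxs
      exact hxD (hsD (by exact_mod_cast hxs))
    · have : s.filter (· ∈ D) = s := by
        refine Finset.filter_true_of_mem ?_
        intro w hws
        exact hsD (by exact_mod_cast hws)
      rw [this, hscl.2]
      omega
  have hdisjB : Disjoint B1nx BDf := by
    rw [Finset.disjoint_left]
    intro s hs1 hs2
    have h1 := (hB1mem s (Finset.mem_filter.mp hs1).1).2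
    have h2 := (hBDmem s hs2).2.1
    omega
  have hpart1 : B1nx.card + BDf.card ≤ n - 1 := by
    have hu : B1nx ∪ BDf ⊆ Tf := Finset.union_subset hsub1 hsub2
    have := Finset.card_le_card hu
    rw [Finset.card_union_of_disjoint hdisjB] at this
    exact le_trans this (Tprime_card hF hn x D hDmem)
  -- Part 2 : triangles containing x
  set Avf : Fin n → Finset (Fin n) := fun v => ({a : Fin n | a ∈ D ∧ G.Adj v a ∧
      ((v ∈ V1 ∧ a ∈ V1) ∨ (v ∈ V2 ∧ a ∈ V2))}).toFinite.toFinset with hAvf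
  set Dbf := Dbar.toFinite.toFinset with hDbf
  have hB1x_sub : B1x ⊆ Dbf.biUnion
      (fun v => (Avf v).image (fun a => ({x, v, a} : Finset (Fin n)))) := by
    intro s hs
    obtain ⟨hsB, hxs⟩ := Finset.mem_filter.mp hs
    obtain ⟨⟨hscl, hsnS⟩, hs1⟩ := hB1mem s hsB
    obtain ⟨v, hveq⟩ := Set.ncard_eq_one.mp hs1
    have hvmem : v ∈ (s : Set (Fin n)) ∩ Dbar := by rw [hveq]; rfl
    have hvs : v ∈ s := by exact_mod_cast hvmem.1
    have hvDbar : v ∈ Dbar := hvmem.2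
    have hvx : v ≠ x := fun h => hxDbar (h ▸ hvDbar)
    -- extract the third vertex
    have hxvsub : ({x, v} : Finset (Fin n)) ⊆ s := by
      intro w hw
      rcases Finset.mem_insert.mp hw with rfl | hw
      · exact hxs
      · exact (Finset.mem_singleton.mp hw) ▸ hvs
    have hxvcard : ({x, v} : Finset (Fin n)).card = 2 := by
      rw [Finset.card_insert_of_notMem (by simp [Ne.symm hvx]), Finset.card_singleton]
    have hsd : 1 ≤ (s \ {x, v}).card := by
      have := Finset.card_sdiff_of_subset hxvsub
      rw [hxvcard, hscl.2] at this
      omega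
    obtain ⟨a, hamem⟩ := Finset.card_pos.mp hsd
    have has : a ∈ s := (Finset.mem_sdiff.mp hamem).1
    have haxv : a ≠ x ∧ a ≠ v := by
      have := (Finset.mem_sdiff.mp hamem).2
      simp only [Finset.mem_insert, Finset.mem_singleton, not_or] at this
      exact this
    have hseq : ({x, v, a} : Finset (Fin n)) = s := by
      apply Finset.eq_of_subset_of_card_le
      · intro w hw
        rcases Finset.mem_insert.mp hw with rfl | hw
        · exact hxs
        · rcases Finset.mem_insert.mp hw with rfl | hw
          · exact hvs
          · exact (Finset.mem_singleton.mp hw) ▸ has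
      · rw [hscl.2]
        have hc3 : ({x, v, a} : Finset (Fin n)).card = 3 := by
          rw [Finset.card_insert_of_notMem (by
            simp only [Finset.mem_insert, Finset.mem_singleton, not_or]
            exact ⟨Ne.symm hvx, Ne.symm haxv.1⟩),
            Finset.card_insert_of_notMem (by
              simp only [Finset.mem_singleton]
              exact Ne.symm haxv.2),
            Finset.card_singleton]
        omega
    -- a is in D
    have haDbar : a ∉ Dbar := by
      intro h
      have : a ∈ (s : Set (Fin n)) ∩ Dbar := ⟨by exact_mod_cast has, h⟩
      rw [hveq] at this
      exact haxv.2 (by exact_mod_cast this)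
    have haD : a ∈ D := hDfull a haxv.1 haDbar
    -- adjacency
    have hadj : ∀ y ∈ s, ∀ z ∈ s, y ≠ z → G.Adj y z := by
      intro y hy z hz hyz
      exact hscl.1 (by exact_mod_cast hy) (by exact_mod_cast hz) hyz
    have hva : G.Adj v a := hadj v hvs a has (fun h => haxv.2 h.symm)
    -- same part
    have hSAdj : ∀ y z : Fin n, y ≠ z →
        (y = x ∨ z = x ∨ (y ∈ V1 ∧ z ∈ V2) ∨ (z ∈ V1 ∧ y ∈ V2)) → S.Adj y z := by
      intro y z hyz hcase
      rw [hSdef, SimpleGraph.fromRel_adj]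
      tauto
    have hcompl : ∀ w : Fin n, w ≠ x → w ∈ V1 ∪ V2 := by
      intro w hw
      rw [hunion]
      exact Set.mem_compl_singleton_iff.mpr hw
    have hnotcross : ¬ ((v ∈ V1 ∧ a ∈ V2) ∨ (a ∈ V1 ∧ v ∈ V2)) := by
      intro hcr
      apply hsnS
      rw [← hseq]
      constructor
      · intro y hy z hz hyz
        simp only [Finset.coe_insert, Set.mem_insert_iff, Finset.coe_singleton,
          Set.mem_singleton_iff] at hy hz
        rcases hy with rfl | rfl | rfl <;> rcases hz with rfl | rfl | rfl <;>
          first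
            | exact absurd rfl hyz
            | exact hSAdj _ _ hyz (Or.inl rfl)
            | exact hSAdj _ _ hyz (Or.inr (Or.inl rfl))
            | exact hSAdj _ _ hyz (Or.inr (Or.inr (by tauto)))
      · rw [hseq, hscl.2]
    have hsame : (v ∈ V1 ∧ a ∈ V1) ∨ (v ∈ V2 ∧ a ∈ V2) := by
      rcases hcompl v hvx with hv1 | hv2
      · rcases hcompl a haxv.1 with ha1 | ha2
        · exact Or.inl ⟨hv1, ha1⟩
        · exact absurd (Or.inl ⟨hv1, ha2⟩) hnotcross
      · rcases hcompl a haxv.1 with ha1 | ha2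
        · exact absurd (Or.inr ⟨ha1, hv2⟩) hnotcross
        · exact Or.inr ⟨hv2, ha2⟩
    refine Finset.mem_biUnion.mpr ⟨v, ?_, ?_⟩
    · rw [hDbf, Set.Finite.mem_toFinset]
      exact hvDbar
    · refine Finset.mem_image.mpr ⟨a, ?_, hseq⟩
      rw [hAvf]
      simp only [Set.Finite.mem_toFinset, Set.mem_setOf_eq]
      exact ⟨haD, hva, hsame⟩
  have hpart2 : (B1x.card : ℝ) ≤ 11 * Real.sqrt δ * n * (Dbar.ncard : ℝ) := by
    have h1 : B1x.card ≤ ∑ v ∈ Dbf, ((Avf v).image (fun a => ({x, v, a} : Finset (Fin n)))).card :=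
      le_trans (Finset.card_le_card hB1x_sub) Finset.card_biUnion_le
    have h2 : ∀ v ∈ Dbf, (((Avf v).image (fun a => ({x, v, a} : Finset (Fin n)))).card : ℝ)
        ≤ 11 * Real.sqrt δ * n := by
      intro v hv
      have hvD : v ∈ Dbar := by rwa [hDbf, Set.Finite.mem_toFinset] at hv
      calc (((Avf v).image (fun a => ({x, v, a} : Finset (Fin n)))).card : ℝ)
          ≤ ((Avf v).card : ℝ) := by exact_mod_cast Finset.card_image_le
        _ = (({a : Fin n | a ∈ D ∧ G.Adj v a ∧
              ((v ∈ V1 ∧ a ∈ V1) ∨ (v ∈ V2 ∧ a ∈ V2))}).ncard : ℝ) := by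
            rw [hAvf]
            norm_cast
            exact (Set.ncard_eq_toFinset_card _ _).symm
        _ ≤ 11 * Real.sqrt δ * n := hAv v hvD
    calc (B1x.card : ℝ) ≤ ∑ v ∈ Dbf, (((Avf v).image
          (fun a => ({x, v, a} : Finset (Fin n)))).card : ℝ) := by exact_mod_cast h1
      _ ≤ ∑ _v ∈ Dbf, 11 * Real.sqrt δ * n := Finset.sum_le_sum h2
      _ = (Dbf.card : ℝ) * (11 * Real.sqrt δ * n) := by
          rw [Finset.sum_const, nsmul_eq_mul]
      _ = 11 * Real.sqrt δ * n * (Dbar.ncard : ℝ) := by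
          rw [hDbf, mul_comm]
          congr 2
          exact (Set.ncard_eq_toFinset_card _ _).symm
  -- put everything together
  have hcal1 : calB1.ncard = B1f.card := Set.ncard_eq_toFinset_card _ _
  have hcal2 : calBD.ncard = BDf.card := Set.ncard_eq_toFinset_card _ _
  have hpart1R : (B1nx.card : ℝ) + (BDf.card : ℝ) ≤ (n : ℝ) - 1 := by
    have : ((B1nx.card + BDf.card : ℕ) : ℝ) ≤ ((n - 1 : ℕ) : ℝ) := by exact_mod_cast hpart1
    push_cast [Nat.cast_sub hn1] at this
    linarith
  rw [hcal1, hcal2]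
  have : (B1f.card : ℝ) = (B1x.card : ℝ) + (B1nx.card : ℝ) := by exact_mod_cast hsplit.symm
  linarith
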